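/- arXiv:2310.07132 — 2 statements merged into one kernel-verified Lean document; each statement's English description precedes it below -/
import Mathlib

section
/- The map d_IQ is a metric on the space of univariate probability distributions on ℝ with continuous CDF and finite first moment: d_IQ(F,G) ≥ 0, d_IQ(F,G) = d_IQ(G,F), d_IQ satisfies the triangle inequality d_IQ(F,H) ≤ d_IQ(F,G) + d_IQ(G,H), and d_IQ(F,G) = 0 if and only if F = G. -/
open MeasureTheory Filter Set ProbabilityTheory

noncomputable def quantileFn (μ : Measure ℝ) (p : ℝ) : ℝ :=
  sInf {η : ℝ | p ≤ (μ (Set.Iic η)).toReal}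

noncomputable def intQuantile (μ : Measure ℝ) (p : ℝ) : ℝ :=
  ∫ t in (0:ℝ)..p, quantileFn μ t

noncomputable def dIQ (μ ν : Measure ℝ) : ℝ :=
  Real.sqrt (∫ t in (0:ℝ)..1, (intQuantile μ t - intQuantile ν t) ^ 2)

set_option linter.unusedSectionVars false

section Minkowski

lemma sqrt_integral_sq_triangle {α : Type*} [MeasurableSpace α] {μ : Measure α}
    {u v : α → ℝ} (hu : MemLp u 2 μ) (hv : MemLp v 2 μ) :
    Real.sqrt (∫ x, (u x + v x) ^ 2 ∂μ) ≤
      Real.sqrt (∫ x, u x ^ 2 ∂μ) + Real.sqrt (∫ x, v x ^ 2 ∂μ) := by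
  set A := ∫ x, u x ^ 2 ∂μ with hA
  set B := ∫ x, v x ^ 2 ∂μ with hB
  have hA0 : 0 ≤ A := integral_nonneg fun x => sq_nonneg _
  have hB0 : 0 ≤ B := integral_nonneg fun x => sq_nonneg _
  have hu2 : Integrable (fun x => u x ^ 2) μ := hu.integrable_sq
  have hv2 : Integrable (fun x => v x ^ 2) μ := hv.integrable_sq
  have hmul : Integrable (fun x => u x * v x) μ := by
    refine Integrable.mono' ((hu2.add hv2).div_const 2)
      (hu.aestronglyMeasurable.mul hv.aestronglyMeasurable) (ae_of_all _ fun x => ?_)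
    simp only [Pi.add_apply]
    rw [Real.norm_eq_abs, abs_mul]
    nlinarith [sq_nonneg (|u x| - |v x|), sq_abs (u x), sq_abs (v x), abs_nonneg (u x),
      abs_nonneg (v x)]
  have hCS : ∫ x, u x * v x ∂μ ≤ Real.sqrt A * Real.sqrt B := by
    have habs : Integrable (fun x => |u x| * |v x|) μ := by
      have : (fun x => |u x| * |v x|) = fun x => |u x * v x| := by
        funext x; rw [abs_mul]
      rw [this]
      exact hmul.abs
    have h1 : ∫ x, u x * v x ∂μ ≤ ∫ x, |u x| * |v x| ∂μ := by
      refine integral_mono hmul habs fun x => ?_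
      rw [← abs_mul]; exact le_abs_self _
    have h2 : ∫ x, |u x| * |v x| ∂μ ≤
        (∫ x, |u x| ^ (2:ℝ) ∂μ) ^ ((1:ℝ)/2) * (∫ x, |v x| ^ (2:ℝ) ∂μ) ^ ((1:ℝ)/2) := by
      refine integral_mul_le_Lp_mul_Lq_of_nonneg ⟨by norm_num, by norm_num, by norm_num⟩
        (ae_of_all _ fun x => abs_nonneg _) (ae_of_all _ fun x => abs_nonneg _) ?_ ?_
      · simpa using hu.norm
      · simpa using hv.norm
    have e1 : ∫ x, |u x| ^ (2:ℝ) ∂μ = A := by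
      rw [hA]; congr 1; funext x
      rw [show ((2:ℝ)) = ((2:ℕ):ℝ) by norm_num, Real.rpow_natCast, sq_abs]
    have e2 : ∫ x, |v x| ^ (2:ℝ) ∂μ = B := by
      rw [hB]; congr 1; funext x
      rw [show ((2:ℝ)) = ((2:ℕ):ℝ) by norm_num, Real.rpow_natCast, sq_abs]
    rw [e1, e2, ← Real.sqrt_eq_rpow, ← Real.sqrt_eq_rpow] at h2
    exact h1.trans h2
  have hexp : ∫ x, (u x + v x) ^ 2 ∂μ = A + 2 * ∫ x, u x * v x ∂μ + B := by
    have : (fun x => (u x + v x) ^ 2) = fun x => u x ^ 2 + 2 * (u x * v x) + v x ^ 2 := by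
      funext x; ring
    have hfg : Integrable (fun x => u x ^ 2 + 2 * (u x * v x)) μ := by
      exact hu2.add (hmul.const_mul 2)
    rw [this, integral_add hfg hv2, integral_add hu2 (hmul.const_mul 2),
      MeasureTheory.integral_const_mul]
  have key : ∫ x, (u x + v x) ^ 2 ∂μ ≤ (Real.sqrt A + Real.sqrt B) ^ 2 := by
    rw [hexp]
    have : (Real.sqrt A + Real.sqrt B) ^ 2 = A + 2 * (Real.sqrt A * Real.sqrt B) + B := by
      rw [add_sq, Real.sq_sqrt hA0, Real.sq_sqrt hB0]; ring
    rw [this]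
    linarith [hCS]
  calc Real.sqrt (∫ x, (u x + v x) ^ 2 ∂μ) ≤ Real.sqrt ((Real.sqrt A + Real.sqrt B) ^ 2) :=
        Real.sqrt_le_sqrt key
    _ = Real.sqrt A + Real.sqrt B := Real.sqrt_sq (by positivity)

end Minkowski

section Quantile
variable (μ : Measure ℝ) [IsProbabilityMeasure μ]

lemma cdf_apply_eq (x : ℝ) : (μ (Set.Iic x)).toReal = cdf μ x := (cdf_eq_real μ x).symm

lemma quantile_set_nonempty {p : ℝ} (hp1 : p < 1) :
    {η : ℝ | p ≤ (μ (Set.Iic η)).toReal}.Nonempty := by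
  have h := (tendsto_cdf_atTop μ).eventually (lt_mem_nhds hp1)
  obtain ⟨x, hx⟩ := h.exists
  exact ⟨x, by rw [mem_setOf_eq, cdf_apply_eq]; exact hx.le⟩

lemma quantile_set_bddBelow {p : ℝ} (hp0 : 0 < p) :
    BddBelow {η : ℝ | p ≤ (μ (Set.Iic η)).toReal} := by
  have h := (tendsto_cdf_atBot μ).eventually (gt_mem_nhds hp0)
  obtain ⟨x, hx⟩ := h.exists
  refine ⟨x, fun η hη => ?_⟩
  by_contra hlt
  push_neg at hlt
  have : cdf μ η ≤ cdf μ x := monotone_cdf μ hlt.le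
  rw [mem_setOf_eq, cdf_apply_eq] at hη
  linarith

lemma cdf_quantile_ge (hc : Continuous fun x => (μ (Set.Iic x)).toReal)
    {p : ℝ} (hp : p ∈ Set.Ioo (0:ℝ) 1) :
    p ≤ (μ (Set.Iic (quantileFn μ p))).toReal := by
  have hclosed : IsClosed {η : ℝ | p ≤ (μ (Set.Iic η)).toReal} :=
    isClosed_le continuous_const hc
  exact hclosed.csInf_mem (quantile_set_nonempty μ hp.2) (quantile_set_bddBelow μ hp.1)

lemma quantile_le_iff (hc : Continuous fun x => (μ (Set.Iic x)).toReal)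
    {p x : ℝ} (hp : p ∈ Set.Ioo (0:ℝ) 1) :
    quantileFn μ p ≤ x ↔ p ≤ (μ (Set.Iic x)).toReal := by
  constructor
  · intro h
    calc p ≤ (μ (Set.Iic (quantileFn μ p))).toReal := cdf_quantile_ge μ hc hp
      _ ≤ (μ (Set.Iic x)).toReal := by
          rw [cdf_apply_eq, cdf_apply_eq]; exact monotone_cdf μ h
  · intro h
    exact csInf_le (quantile_set_bddBelow μ hp.1) h

lemma quantile_monotoneOn (hc : Continuous fun x => (μ (Set.Iic x)).toReal) :
    MonotoneOn (quantileFn μ) (Set.Ioo (0:ℝ) 1) := by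
  intro p hp q hq hpq
  rw [quantile_le_iff μ hc hp]
  exact hpq.trans (cdf_quantile_ge μ hc hq)

lemma quantile_aemeasurable (hc : Continuous fun x => (μ (Set.Iic x)).toReal) :
    AEMeasurable (quantileFn μ) (volume.restrict (Set.Ioo (0:ℝ) 1)) :=
  aemeasurable_restrict_of_monotoneOn measurableSet_Ioo (quantile_monotoneOn μ hc)

lemma map_quantile (hc : Continuous fun x => (μ (Set.Iic x)).toReal) :
    Measure.map (quantileFn μ) (volume.restrict (Set.Ioo (0:ℝ) 1)) = μ := by
  have hmeas := quantile_aemeasurable μ hc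
  have hfin : IsProbabilityMeasure
      (Measure.map (quantileFn μ) (volume.restrict (Set.Ioo (0:ℝ) 1))) := by
    constructor
    rw [Measure.map_apply_of_aemeasurable hmeas MeasurableSet.univ]
    simp [Real.volume_Ioo]
  refine Measure.ext_of_Iic _ μ (fun x => ?_)
  rw [Measure.map_apply_of_aemeasurable hmeas measurableSet_Iic,
    Measure.restrict_apply' measurableSet_Ioo]
  set c := (μ (Set.Iic x)).toReal with hcdef
  have hc0 : 0 ≤ c := ENNReal.toReal_nonneg
  have hc1 : c ≤ 1 := by
    rw [hcdef, cdf_apply_eq]; exact cdf_le_one μ x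
  have hset : quantileFn μ ⁻¹' Set.Iic x ∩ Set.Ioo 0 1 = Set.Iic c ∩ Set.Ioo 0 1 := by
    ext t
    simp only [mem_inter_iff, mem_preimage, mem_Iic, and_congr_left_iff]
    intro ht
    exact quantile_le_iff μ hc ht
  rw [hset]
  have hμx : μ (Set.Iic x) = ENNReal.ofReal c := (ENNReal.ofReal_toReal (measure_ne_top μ _)).symm
  rw [hμx]
  rcases lt_or_ge c 1 with h1 | h1
  · have : Set.Iic c ∩ Set.Ioo (0:ℝ) 1 = Set.Ioc 0 c := by
      ext t
      simp only [mem_inter_iff, mem_Iic, mem_Ioo, mem_Ioc]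
      constructor
      · rintro ⟨h, h2, _⟩; exact ⟨h2, h⟩
      · rintro ⟨h2, h⟩; exact ⟨h, h2, lt_of_le_of_lt h h1⟩
    rw [this, Real.volume_Ioc, sub_zero]
  · have hc1' : c = 1 := le_antisymm hc1 h1
    have : Set.Iic c ∩ Set.Ioo (0:ℝ) 1 = Set.Ioo 0 1 := by
      rw [hc1']
      ext t
      simp only [mem_inter_iff, mem_Iic, mem_Ioo]
      exact ⟨fun h => h.2, fun h => ⟨h.2.le, h⟩⟩
    rw [this, Real.volume_Ioo, hc1']
    norm_num

lemma quantile_integrableOn (hc : Continuous fun x => (μ (Set.Iic x)).toReal)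
    (hmom : Integrable id μ) :
    IntegrableOn (quantileFn μ) (Set.Ioo (0:ℝ) 1) volume := by
  have hmeas := quantile_aemeasurable μ hc
  have : Integrable id (Measure.map (quantileFn μ) (volume.restrict (Set.Ioo (0:ℝ) 1))) := by
    rw [map_quantile μ hc]; exact hmom
  rw [integrable_map_measure aestronglyMeasurable_id hmeas] at this
  exact this

lemma quantile_intervalIntegrable (hQint : IntegrableOn (quantileFn μ) (Set.Ioo (0:ℝ) 1) volume)
    {a b : ℝ} (ha : 0 ≤ a) (hab : a ≤ b) (hb : b ≤ 1) :
    IntervalIntegrable (quantileFn μ) volume a b := by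
  rw [intervalIntegrable_iff_integrableOn_Ioo_of_le hab]
  exact hQint.mono_set (Set.Ioo_subset_Ioo ha hb)

lemma intQuantile_continuousOn (hQint : IntegrableOn (quantileFn μ) (Set.Ioo (0:ℝ) 1) volume) :
    ContinuousOn (intQuantile μ) (Set.Icc (0:ℝ) 1) := by
  have h : IntegrableOn (quantileFn μ) (Set.uIcc (0:ℝ) 1) volume := by
    rw [Set.uIcc_of_le zero_le_one]
    exact hQint.congr_set_ae Ioo_ae_eq_Icc.symm
  have := intervalIntegral.continuousOn_primitive_interval h
  rwa [Set.uIcc_of_le zero_le_one] at this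

lemma intQuantile_diff (hQint : IntegrableOn (quantileFn μ) (Set.Ioo (0:ℝ) 1) volume)
    {a b : ℝ} (ha : 0 < a) (hab : a ≤ b) (hb : b < 1) :
    intQuantile μ b - intQuantile μ a = ∫ t in a..b, quantileFn μ t := by
  have h1 : IntervalIntegrable (quantileFn μ) volume 0 a :=
    quantile_intervalIntegrable μ hQint le_rfl ha.le (hab.trans hb.le)
  have h2 : IntervalIntegrable (quantileFn μ) volume a b :=
    quantile_intervalIntegrable μ hQint ha.le hab hb.le
  have := intervalIntegral.integral_add_adjacent_intervals h1 h2
  unfold intQuantile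
  linarith [this]

lemma intQuantile_slope_bounds (hQint : IntegrableOn (quantileFn μ) (Set.Ioo (0:ℝ) 1) volume)
    (hQmono : MonotoneOn (quantileFn μ) (Set.Ioo (0:ℝ) 1))
    {a b : ℝ} (ha : 0 < a) (hab : a < b) (hb : b < 1) :
    quantileFn μ a * (b - a) ≤ intQuantile μ b - intQuantile μ a ∧
      intQuantile μ b - intQuantile μ a ≤ quantileFn μ b * (b - a) := by
  rw [intQuantile_diff μ hQint ha hab.le hb]
  have hint : IntervalIntegrable (quantileFn μ) volume a b :=
    quantile_intervalIntegrable μ hQint ha.le hab.le hb.le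
  have hIcc : Set.Icc a b ⊆ Set.Ioo (0:ℝ) 1 := fun t ht =>
    ⟨lt_of_lt_of_le ha ht.1, lt_of_le_of_lt ht.2 hb⟩
  constructor
  · have := intervalIntegral.integral_mono_on hab.le
      (intervalIntegrable_const (c := quantileFn μ a)) hint
      (fun t ht => hQmono (hIcc ⟨le_refl a, hab.le⟩ : a ∈ _) (hIcc ht) ht.1)
    simpa [mul_comm, intervalIntegral.integral_const, smul_eq_mul] using this
  · have := intervalIntegral.integral_mono_on hab.le hint
      (intervalIntegrable_const (c := quantileFn μ b))
      (fun t ht => hQmono (hIcc ht) (hIcc ⟨hab.le, le_refl b⟩) ht.2)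
    simpa [mul_comm, intervalIntegral.integral_const, smul_eq_mul] using this

end Quantile

section KeyStep

lemma quantile_eq_of_intQuantile_eqOn (F G : Measure ℝ)
    [IsProbabilityMeasure F] [IsProbabilityMeasure G]
    (hFcdf : Continuous fun x => (F (Set.Iic x)).toReal)
    (hGcdf : Continuous fun x => (G (Set.Iic x)).toReal)
    (hFQint : IntegrableOn (quantileFn F) (Set.Ioo (0:ℝ) 1) volume)
    (hGQint : IntegrableOn (quantileFn G) (Set.Ioo (0:ℝ) 1) volume)
    (heq : Set.EqOn (intQuantile F) (intQuantile G) (Set.Ioo (0:ℝ) 1)) :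
    ∀ t ∈ Set.Ioo (0:ℝ) 1, quantileFn F t = quantileFn G t := by
  have claim : ∀ (μ ν : Measure ℝ) [IsProbabilityMeasure μ] [IsProbabilityMeasure ν],
      (Continuous fun x => (μ (Set.Iic x)).toReal) →
      (Continuous fun x => (ν (Set.Iic x)).toReal) →
      IntegrableOn (quantileFn μ) (Set.Ioo (0:ℝ) 1) volume →
      IntegrableOn (quantileFn ν) (Set.Ioo (0:ℝ) 1) volume →
      Set.EqOn (intQuantile μ) (intQuantile ν) (Set.Ioo (0:ℝ) 1) →
      ∀ t ∈ Set.Ioo (0:ℝ) 1, quantileFn μ t ≤ quantileFn ν t := by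
    intro μ ν _ _ hμc hνc hμi hνi he t ht
    have hstep : ∀ a, a ∈ Set.Ioo (0:ℝ) 1 → a < t → quantileFn μ a ≤ quantileFn ν t := by
      intro a ha hat
      have h1 := (intQuantile_slope_bounds μ hμi (quantile_monotoneOn μ hμc) ha.1 hat ht.2).1
      have h2 := (intQuantile_slope_bounds ν hνi (quantile_monotoneOn ν hνc) ha.1 hat ht.2).2
      have hsame : intQuantile μ t - intQuantile μ a = intQuantile ν t - intQuantile ν a := by
        rw [he ha, he ht]
      have hpos : 0 < t - a := sub_pos.mpr hat
      nlinarith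
    rw [quantile_le_iff μ hμc ht]
    by_contra hlt
    push_neg at hlt
    set y := (μ (Set.Iic (quantileFn ν t))).toReal with hy
    have hy0 : 0 ≤ y := ENNReal.toReal_nonneg
    have hmax : max y (t / 2) < t := by
      rcases max_cases y (t/2) with ⟨h, _⟩ | ⟨h, _⟩ <;> rw [h] <;> linarith [ht.1]
    obtain ⟨a, ha1, ha2⟩ := exists_between hmax
    have haIoo : a ∈ Set.Ioo (0:ℝ) 1 := by
      constructor
      · have : (0:ℝ) < t / 2 := by linarith [ht.1]
        exact lt_of_lt_of_le this ((le_max_right _ _).trans ha1.le)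
      · exact ha2.trans ht.2
    have hQ : quantileFn μ a ≤ quantileFn ν t := hstep a haIoo ha2
    have : a ≤ y := by
      calc a ≤ (μ (Set.Iic (quantileFn μ a))).toReal := cdf_quantile_ge μ hμc haIoo
        _ ≤ y := by
            rw [hy, cdf_apply_eq, cdf_apply_eq]
            exact monotone_cdf μ hQ
    have : y < a := lt_of_le_of_lt (le_max_left _ _) ha1
    linarith
  intro t ht
  exact le_antisymm (claim F G hFcdf hGcdf hFQint hGQint heq t ht)
    (claim G F hGcdf hFcdf hGQint hFQint heq.symm t ht)

end KeyStep

/-- `d_IQ` is a metric on the space of univariate probability distributions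
on `ℝ` with continuous CDF and finite first moment: nonnegativity, symmetry, triangle
inequality, and `d_IQ(F,G) = 0 ↔ F = G`. -/
theorem dIQ_is_metric
    (F G H : Measure ℝ) [IsProbabilityMeasure F] [IsProbabilityMeasure G]
    [IsProbabilityMeasure H]
    (hFcdf : Continuous fun x => (F (Set.Iic x)).toReal)
    (hGcdf : Continuous fun x => (G (Set.Iic x)).toReal)
    (hHcdf : Continuous fun x => (H (Set.Iic x)).toReal)
    (hFmom : Integrable id F) (hGmom : Integrable id G) (hHmom : Integrable id H) :
    0 ≤ dIQ F G ∧ dIQ F G = dIQ G F ∧ dIQ F H ≤ dIQ F G + dIQ G H ∧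
      (dIQ F G = 0 ↔ F = G) := by
  have hFQint := quantile_integrableOn F hFcdf hFmom
  have hGQint := quantile_integrableOn G hGcdf hGmom
  have hHQint := quantile_integrableOn H hHcdf hHmom
  have hFc := intQuantile_continuousOn F hFQint
  have hGc := intQuantile_continuousOn G hGQint
  have hHc := intQuantile_continuousOn H hHQint
  -- Memℒp facts for differences on the restricted measure
  have memdiff : ∀ (μ ν : Measure ℝ), ContinuousOn (intQuantile μ) (Set.Icc (0:ℝ) 1) →
      ContinuousOn (intQuantile ν) (Set.Icc (0:ℝ) 1) →
      MemLp (fun t => intQuantile μ t - intQuantile ν t) 2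
        (volume.restrict (Set.Ioc (0:ℝ) 1)) := by
    intro μ ν hμ hν
    have hcont : ContinuousOn (fun t => intQuantile μ t - intQuantile ν t)
        (Set.Icc (0:ℝ) 1) := hμ.sub hν
    have haesm : AEStronglyMeasurable (fun t => intQuantile μ t - intQuantile ν t)
        (volume.restrict (Set.Ioc (0:ℝ) 1)) :=
      (hcont.mono Set.Ioc_subset_Icc_self).aestronglyMeasurable measurableSet_Ioc
    rw [memLp_two_iff_integrable_sq haesm]
    have : IntegrableOn (fun t => (intQuantile μ t - intQuantile ν t) ^ 2)
        (Set.Icc (0:ℝ) 1) volume := (hcont.pow 2).integrableOn_Icc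
    exact this.mono_set Set.Ioc_subset_Icc_self
  refine ⟨Real.sqrt_nonneg _, ?_, ?_, ?_⟩
  · unfold dIQ
    congr 1
    apply intervalIntegral.integral_congr
    intro t _
    ring
  · -- triangle inequality
    unfold dIQ
    rw [intervalIntegral.integral_of_le zero_le_one, intervalIntegral.integral_of_le zero_le_one,
      intervalIntegral.integral_of_le zero_le_one]
    have h := sqrt_integral_sq_triangle (μ := volume.restrict (Set.Ioc (0:ℝ) 1))
      (memdiff F G hFc hGc) (memdiff G H hGc hHc)
    have hfun : (fun t => intQuantile F t - intQuantile H t) =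
        fun t => (intQuantile F t - intQuantile G t) + (intQuantile G t - intQuantile H t) := by
      funext t; ring
    calc Real.sqrt (∫ t in Set.Ioc (0:ℝ) 1, (intQuantile F t - intQuantile H t) ^ 2)
        = Real.sqrt (∫ t in Set.Ioc (0:ℝ) 1,
            ((intQuantile F t - intQuantile G t) + (intQuantile G t - intQuantile H t)) ^ 2) := by
          rw [show (fun t => (intQuantile F t - intQuantile H t) ^ 2) =
            (fun t => ((intQuantile F t - intQuantile G t) +
              (intQuantile G t - intQuantile H t)) ^ 2) from by funext t; ring]
      _ ≤ _ := h
  · constructor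
    · intro h0
      -- integral of the square is zero
      have hknn : ∀ t ∈ Set.Icc (0:ℝ) 1, 0 ≤ (intQuantile F t - intQuantile G t) ^ 2 :=
        fun t _ => sq_nonneg _
      have hI0 : (0:ℝ) ≤ ∫ t in (0:ℝ)..1, (intQuantile F t - intQuantile G t) ^ 2 :=
        intervalIntegral.integral_nonneg zero_le_one (fun t ht => sq_nonneg _)
      have hI : ∫ t in (0:ℝ)..1, (intQuantile F t - intQuantile G t) ^ 2 = 0 := by
        unfold dIQ at h0
        exact (Real.sqrt_eq_zero hI0).mp h0
      rw [intervalIntegral.integral_of_le zero_le_one] at hI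
      have hint : IntegrableOn (fun t => (intQuantile F t - intQuantile G t) ^ 2)
          (Set.Ioc (0:ℝ) 1) volume :=
        (((hFc.sub hGc).pow 2).integrableOn_Icc).mono_set Set.Ioc_subset_Icc_self
      have hae : (fun t => (intQuantile F t - intQuantile G t) ^ 2)
          =ᵐ[volume.restrict (Set.Ioc (0:ℝ) 1)] 0 := by
        rw [← integral_eq_zero_iff_of_nonneg (fun t => sq_nonneg _) hint]
        exact hI
      have heqOn : Set.EqOn (fun t => (intQuantile F t - intQuantile G t) ^ 2) 0
          (Set.Ioc (0:ℝ) 1) := by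
        refine Measure.eqOn_of_ae_eq hae
          (((hFc.sub hGc).pow 2).mono Set.Ioc_subset_Icc_self) continuousOn_const ?_
        rw [interior_Ioc, closure_Ioo (by norm_num : (0:ℝ) ≠ 1)]
        exact Set.Ioc_subset_Icc_self
      have hiq : Set.EqOn (intQuantile F) (intQuantile G) (Set.Ioo (0:ℝ) 1) := by
        intro t ht
        have := heqOn (Set.Ioo_subset_Ioc_self ht)
        have h2 : (intQuantile F t - intQuantile G t) ^ 2 = 0 := this
        have := pow_eq_zero_iff (n := 2) (by norm_num) |>.mp h2
        linarith [this]
      have hq := quantile_eq_of_intQuantile_eqOn F G hFcdf hGcdf hFQint hGQint hiq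
      have haeq : quantileFn F =ᵐ[volume.restrict (Set.Ioo (0:ℝ) 1)] quantileFn G := by
        rw [Filter.EventuallyEq, ae_restrict_iff' measurableSet_Ioo]
        exact ae_of_all _ hq
      calc F = Measure.map (quantileFn F) (volume.restrict (Set.Ioo (0:ℝ) 1)) :=
            (map_quantile F hFcdf).symm
        _ = Measure.map (quantileFn G) (volume.restrict (Set.Ioo (0:ℝ) 1)) :=
            Measure.map_congr haeq
        _ = G := map_quantile G hGcdf
    · intro h
      rw [h]
      unfold dIQ
      simp
end

section
/- If two probability distributions F and G on ℝ with finite first moments have equal integrated quantile functions, i.e. F^{(-2)}(t) = G^{(-2)}(t) for almost every t ∈ (0,1), then F = G. -/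
set_option linter.unusedSectionVars false

open MeasureTheory Filter Set ProbabilityTheory
open scoped Topology

section lemmas
variable (μ : Measure ℝ) [IsProbabilityMeasure μ]

lemma quantileFn_eq : quantileFn μ = fun p => sInf {η : ℝ | p ≤ cdf μ η} := by
  funext p
  simp [quantileFn, cdf_eq_real, measureReal_def]

lemma qset_nonempty {p : ℝ} (hp1 : p < 1) : {η : ℝ | p ≤ cdf μ η}.Nonempty := by
  obtain ⟨η, hη⟩ := ((tendsto_cdf_atTop μ).eventually (eventually_gt_nhds hp1)).exists
  exact ⟨η, hη.le⟩

lemma qset_bddBelow {p : ℝ} (hp : 0 < p) : BddBelow {η : ℝ | p ≤ cdf μ η} := by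
  have h := (tendsto_cdf_atBot μ).eventually (eventually_lt_nhds hp)
  obtain ⟨y, hy⟩ := h.exists
  exact ⟨y, fun η hη => le_of_not_gt fun hlt => absurd (le_trans hη (monotone_cdf μ hlt.le)) (not_le.2 hy)⟩

lemma quantileFn_le_iff {p x : ℝ} (hp : 0 < p) (hp1 : p < 1) :
    quantileFn μ p ≤ x ↔ p ≤ cdf μ x := by
  rw [quantileFn_eq]
  set S := {η : ℝ | p ≤ cdf μ η} with hS
  have hne : S.Nonempty := qset_nonempty μ hp1
  have hbdd : BddBelow S := qset_bddBelow μ hp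
  have hup : ∀ ⦃η⦄, η ∈ S → ∀ ⦃η'⦄, η ≤ η' → η' ∈ S :=
    fun η hη η' hle => le_trans hη (monotone_cdf μ hle)
  have hmem : sInf S ∈ S := by
    have hsub : Ioi (sInf S) ⊆ S := fun η hη => by
      obtain ⟨s, hs, hs'⟩ := (csInf_lt_iff hbdd hne).mp hη
      exact hup hs hs'.le
    have hrc : ContinuousWithinAt (cdf μ) (Ici (sInf S)) (sInf S) :=
      (cdf μ).right_continuous _
    have : Tendsto (cdf μ) (𝓝[>] (sInf S)) (𝓝 (cdf μ (sInf S))) :=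
      hrc.tendsto.mono_left (nhdsWithin_mono _ Ioi_subset_Ici_self)
    exact ge_of_tendsto this (eventually_nhdsWithin_of_forall fun η hη => hsub hη)
  constructor
  · intro hx
    exact le_trans hmem (monotone_cdf μ hx)
  · intro hx
    exact csInf_le hbdd hx

lemma quantileFn_monotoneOn : MonotoneOn (quantileFn μ) (Ioo 0 1) := by
  intro p hp q hq hpq
  rw [quantileFn_eq]
  exact csInf_le_csInf (qset_bddBelow μ hp.1) (qset_nonempty μ hq.2)
    (fun η hη => le_trans hpq hη)

lemma quantileFn_zero_of_nonpos {p : ℝ} (hp : p ≤ 0) : quantileFn μ p = 0 := by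
  have : {η : ℝ | p ≤ (μ (Set.Iic η)).toReal} = univ := by
    ext η
    simp only [mem_setOf_eq, mem_univ, iff_true]
    exact le_trans hp ENNReal.toReal_nonneg
  rw [quantileFn, this]
  exact Real.sInf_of_not_bddBelow (by simpa using not_bddBelow_univ)

lemma quantileFn_zero_of_one_lt {p : ℝ} (hp : 1 < p) : quantileFn μ p = 0 := by
  have : {η : ℝ | p ≤ (μ (Set.Iic η)).toReal} = ∅ := by
    ext η
    simp only [mem_setOf_eq, mem_empty_iff_false, iff_false, not_le]
    calc (μ (Set.Iic η)).toReal ≤ (μ univ).toReal := by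
          gcongr
          · exact measure_ne_top μ _
          · exact subset_univ _
      _ = 1 := by simp
      _ < p := hp
  rw [quantileFn, this]
  exact Real.sInf_empty

lemma levelSet_eq (x : ℝ) :
    Ioo (0:ℝ) 1 ∩ {p | quantileFn μ p ≤ x} = Ioo (0:ℝ) 1 ∩ Iic (cdf μ x) := by
  ext p
  simp only [mem_inter_iff, mem_Ioo, mem_setOf_eq, mem_Iic, and_congr_right_iff]
  intro hp
  exact quantileFn_le_iff μ hp.1 hp.2

lemma volume_levelSet (x : ℝ) :
    volume (Ioo (0:ℝ) 1 ∩ {p | quantileFn μ p ≤ x}) = μ (Set.Iic x) := by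
  rw [levelSet_eq, ← ofReal_cdf μ x]
  have h0 : 0 ≤ cdf μ x := cdf_nonneg μ x
  have h1 : cdf μ x ≤ 1 := cdf_le_one μ x
  rcases lt_or_eq_of_le h1 with h1' | h1'
  · have : Ioo (0:ℝ) 1 ∩ Iic (cdf μ x) = Ioc 0 (cdf μ x) := by
      ext p
      simp only [mem_inter_iff, mem_Ioo, mem_Iic, mem_Ioc]
      constructor
      · rintro ⟨⟨h1, h2⟩, h3⟩; exact ⟨h1, h3⟩
      · rintro ⟨h1, h3⟩; exact ⟨⟨h1, lt_of_le_of_lt h3 h1'⟩, h3⟩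
    rw [this, Real.volume_Ioc, sub_zero]
  · have : Ioo (0:ℝ) 1 ∩ Iic (cdf μ x) = Ioo 0 1 := by
      rw [inter_eq_left]
      intro p hp
      rw [mem_Iic, h1']
      exact hp.2.le
    rw [this, Real.volume_Ioo, sub_zero, ← h1']

lemma restrict_levelSet (x : ℝ) :
    (volume.restrict (Ioo (0:ℝ) 1)) {p | quantileFn μ p ≤ x} = μ (Set.Iic x) := by
  rw [Measure.restrict_apply' measurableSet_Ioo, inter_comm, volume_levelSet]

lemma quantileFn_aemeasurable :
    AEMeasurable (quantileFn μ) (volume.restrict (Ioo (0:ℝ) 1)) :=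
  aemeasurable_restrict_of_monotoneOn measurableSet_Ioo (quantileFn_monotoneOn μ)

instance : IsProbabilityMeasure (volume.restrict (Ioo (0:ℝ) 1)) :=
  ⟨by simp [Measure.restrict_apply_univ]⟩

lemma map_quantileFn :
    Measure.map (quantileFn μ) (volume.restrict (Ioo (0:ℝ) 1)) = μ := by
  haveI : IsProbabilityMeasure (Measure.map (quantileFn μ) (volume.restrict (Ioo (0:ℝ) 1))) :=
    Measure.isProbabilityMeasure_map (quantileFn_aemeasurable μ)
  refine Measure.ext_of_Iic _ _ (fun x => ?_)
  rw [Measure.map_apply_of_aemeasurable (quantileFn_aemeasurable μ) measurableSet_Iic]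
  exact restrict_levelSet μ x

lemma quantileFn_integrableOn (hmom : Integrable id μ) :
    Integrable (quantileFn μ) (volume.restrict (Ioo (0:ℝ) 1)) := by
  have h := (integrable_map_measure (f := quantileFn μ) (g := id)
    (by rw [map_quantileFn]; exact hmom.aestronglyMeasurable)
    (quantileFn_aemeasurable μ)).mp (by rw [map_quantileFn]; exact hmom)
  simpa using h

lemma quantileFn_integrable (hmom : Integrable id μ) :
    Integrable (quantileFn μ) volume := by
  have h1 : Integrable ((Ioo (0:ℝ) 1).indicator (quantileFn μ)) volume :=
    (integrable_indicator_iff measurableSet_Ioo).2 (quantileFn_integrableOn μ hmom)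
  refine h1.congr ?_
  have h2 : ∀ᵐ p ∂(volume : Measure ℝ), p ≠ 1 := by
    rw [ae_iff]
    simp only [ne_eq, not_not]
    have : {a : ℝ | a = 1} = {1} := by ext p; simp
    rw [this]
    exact Real.volume_singleton
  filter_upwards [h2] with p hp
  by_cases hmem : p ∈ Ioo (0:ℝ) 1
  · rw [indicator_of_mem hmem]
  · rw [indicator_of_notMem hmem]
    simp only [mem_Ioo, not_and_or, not_lt] at hmem
    rcases hmem with h | h
    · exact (quantileFn_zero_of_nonpos μ h).symm
    · exact (quantileFn_zero_of_one_lt μ (lt_of_le_of_ne h (Ne.symm hp))).symm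

end lemmas

noncomputable def clampQ (μ : Measure ℝ) (n : ℕ) (p : ℝ) : ℝ :=
  quantileFn μ (min (max p (1/(n+2))) (1 - 1/(n+2)))

lemma clamp_mem (n : ℕ) (p : ℝ) : min (max p (1/((n:ℝ)+2))) (1 - 1/((n:ℝ)+2)) ∈ Ioo (0:ℝ) 1 := by
  have h2 : (0:ℝ) < (n:ℝ) + 2 := by positivity
  have ha : (0:ℝ) < 1/((n:ℝ)+2) := by positivity
  have hb : 1/((n:ℝ)+2) ≤ 1/2 := by
    rw [div_le_div_iff₀ h2 (by norm_num)]
    linarith [Nat.cast_nonneg (α := ℝ) n]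
  constructor
  · rw [lt_min_iff]
    constructor
    · exact lt_of_lt_of_le ha (le_max_right _ _)
    · linarith
  · exact lt_of_le_of_lt (min_le_right _ _) (by linarith)

lemma clampQ_monotone (μ : Measure ℝ) [IsProbabilityMeasure μ] (n : ℕ) :
    Monotone (clampQ μ n) := by
  intro p q hpq
  exact quantileFn_monotoneOn μ (clamp_mem n p) (clamp_mem n q)
    (min_le_min (max_le_max hpq le_rfl) le_rfl)

lemma clampQ_eqOn (μ : Measure ℝ) (n : ℕ) :
    EqOn (clampQ μ n) (quantileFn μ) (Ioo (1/((n:ℝ)+2)) (1 - 1/((n:ℝ)+2))) := by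
  intro p hp
  unfold clampQ
  rw [max_eq_left hp.1.le, min_eq_left hp.2.le]

lemma countable_discont (μ : Measure ℝ) [IsProbabilityMeasure μ] :
    Set.Countable {t | t ∈ Ioo (0:ℝ) 1 ∧ ¬ ContinuousAt (quantileFn μ) t} := by
  have hsub : {t | t ∈ Ioo (0:ℝ) 1 ∧ ¬ ContinuousAt (quantileFn μ) t} ⊆
      ⋃ n : ℕ, {t | ¬ ContinuousAt (clampQ μ n) t} := by
    rintro t ⟨ht, hct⟩
    have hlim : Tendsto (fun n : ℕ => 1/((n:ℝ)+2)) atTop (𝓝 0) := by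
      have := tendsto_one_div_add_atTop_nhds_zero_nat (𝕜 := ℝ)
      have h2 : Tendsto (fun n : ℕ => ((n:ℝ)+2)) atTop atTop :=
        tendsto_atTop_add_const_right _ 2 tendsto_natCast_atTop_atTop
      simpa [Pi.inv_def] using h2.inv_tendsto_atTop
    have hev : ∀ᶠ n : ℕ in atTop, 1/((n:ℝ)+2) < min t (1-t) := by
      have hpos : 0 < min t (1-t) := lt_min ht.1 (by linarith [ht.2])
      exact hlim.eventually (eventually_lt_nhds hpos)
    obtain ⟨n, hn⟩ := hev.exists
    refine mem_iUnion.2 ⟨n, ?_⟩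
    simp only [mem_setOf_eq]
    intro hcc
    apply hct
    refine hcc.congr ?_
    have hmem : Ioo (1/((n:ℝ)+2)) (1 - 1/((n:ℝ)+2)) ∈ 𝓝 t := by
      refine Ioo_mem_nhds ?_ ?_
      · exact lt_of_lt_of_le hn (min_le_left _ _)
      · have := lt_of_lt_of_le hn (min_le_right _ _); linarith
    exact eventuallyEq_of_mem hmem (clampQ_eqOn μ n)
  exact Set.Countable.mono hsub
    (countable_iUnion fun n => (clampQ_monotone μ n).countable_not_continuousAt)

/-- if two probability distributions on `ℝ` with finite first moments have
equal integrated quantile functions a.e. on `(0,1)`, then they are equal. -/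
theorem eq_of_intQuantile_ae_eq
    (F G : Measure ℝ) [IsProbabilityMeasure F] [IsProbabilityMeasure G]
    (hFmom : Integrable id F) (hGmom : Integrable id G)
    (h : ∀ᵐ t ∂(volume.restrict (Set.Ioo (0:ℝ) 1)), intQuantile F t = intQuantile G t) :
    F = G := by
  have hintF : Integrable (quantileFn F) volume := quantileFn_integrable F hFmom
  have hintG : Integrable (quantileFn G) volume := quantileFn_integrable G hGmom
  have hcF : Continuous (intQuantile F) :=
    intervalIntegral.continuous_primitive (fun a b => hintF.intervalIntegrable) 0
  have hcG : Continuous (intQuantile G) :=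
    intervalIntegral.continuous_primitive (fun a b => hintG.intervalIntegrable) 0
  -- upgrade a.e. equality of primitives to equality on Ioo 0 1
  have heq : EqOn (intQuantile F) (intQuantile G) (Ioo (0:ℝ) 1) := by
    intro t ht
    by_contra hne
    set U : Set ℝ := {s | intQuantile F s ≠ intQuantile G s} ∩ Ioo 0 1 with hU
    have hUopen : IsOpen U := (isOpen_ne_fun hcF hcG).inter isOpen_Ioo
    have hUpos : 0 < volume U := hUopen.measure_pos volume ⟨t, hne, ht⟩
    rw [ae_iff] at h
    rw [Measure.restrict_apply' measurableSet_Ioo] at h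
    have : volume U ≤ 0 := h ▸ measure_mono (fun s hs => ⟨hs.1, hs.2⟩)
    exact absurd (le_antisymm this (zero_le)) (ne_of_gt hUpos)
  -- a.e. equality of quantile functions on (0,1)
  have hae : quantileFn F =ᵐ[volume.restrict (Ioo (0:ℝ) 1)] quantileFn G := by
    have hkey : ∀ t ∈ Ioo (0:ℝ) 1, ContinuousAt (quantileFn F) t →
        ContinuousAt (quantileFn G) t → quantileFn F t = quantileFn G t := by
      intro t ht hcf hcg
      have d1 : HasDerivAt (intQuantile F) (quantileFn F t) t :=
        intervalIntegral.integral_hasDerivAt_right hintF.intervalIntegrable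
          ⟨univ, univ_mem, hintF.aestronglyMeasurable.restrict⟩ hcf
      have d2 : HasDerivAt (intQuantile G) (quantileFn G t) t :=
        intervalIntegral.integral_hasDerivAt_right hintG.intervalIntegrable
          ⟨univ, univ_mem, hintG.aestronglyMeasurable.restrict⟩ hcg
      have hev : intQuantile G =ᶠ[𝓝 t] intQuantile F :=
        eventuallyEq_of_mem (Ioo_mem_nhds ht.1 ht.2) (fun s hs => (heq hs).symm)
      have d1' : HasDerivAt (intQuantile G) (quantileFn F t) t :=
        d1.congr_of_eventuallyEq hev
      exact d1'.unique d2
    have hBsub : {t | t ∈ Ioo (0:ℝ) 1 ∧ quantileFn F t ≠ quantileFn G t} ⊆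
        {t | t ∈ Ioo (0:ℝ) 1 ∧ ¬ ContinuousAt (quantileFn F) t} ∪
        {t | t ∈ Ioo (0:ℝ) 1 ∧ ¬ ContinuousAt (quantileFn G) t} := by
      rintro t ⟨ht, hne⟩
      by_contra hc
      rw [mem_union] at hc
      simp only [mem_setOf_eq, not_and, not_not, mem_union] at hc
      push_neg at hc
      exact hne (hkey t ht (hc.1 ht) (hc.2 ht))
    have hBnull : volume {t | t ∈ Ioo (0:ℝ) 1 ∧ quantileFn F t ≠ quantileFn G t} = 0 :=
      measure_mono_null hBsub
        (measure_union_null ((countable_discont F).measure_zero _)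
          ((countable_discont G).measure_zero _))
    rw [Filter.EventuallyEq, ae_iff, Measure.restrict_apply' measurableSet_Ioo]
    refine measure_mono_null (fun t ht => ?_) hBnull
    exact ⟨ht.2, ht.1⟩
  -- conclude equality of measures via cdfs
  refine Measure.ext_of_Iic F G (fun x => ?_)
  rw [← restrict_levelSet F x, ← restrict_levelSet G x]
  refine measure_congr ?_
  filter_upwards [hae] with p hp
  change (quantileFn F p ≤ x) = (quantileFn G p ≤ x)
  rw [hp]
end
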